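/- For every n ≥ 1 there exist vectors x_1,…,x_n ∈ c00 such that, setting x = Σ_{j=1}^n x_j: (1) ‖x_j‖_1 = 1/2 for all j = 1,…,n; (2) ‖x‖_1 ≤ 1; (3) ‖x‖_2 ≥ n/4. Consequently, sup{ ‖x‖_2 / ‖x‖_1 : x ∈ c00, x ≠ 0 } = ∞. -/

import Mathlib

/-- The ℓ¹-norm on `c00 = ℕ →₀ ℝ`. -/
noncomputable def l1 (x : ℕ →₀ ℝ) : ℝ := ∑ n ∈ x.support, |x n|

/-- `restr E x = Ex`, the restriction of `x` to the finite set `E`. -/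
noncomputable def restr (E : Finset ℕ) (x : ℕ →₀ ℝ) : ℕ →₀ ℝ :=
  x.filter (fun n => n ∈ E)

/-- `Admissible n Es` says that `E_1, …, E_n` are finite nonempty subsets of ℕ
with `n ≤ E_1 < E_2 < ⋯ < E_n`. -/
def Admissible (n : ℕ) (Es : Fin n → Finset ℕ) : Prop :=
  0 < n ∧ (∀ i, (Es i).Nonempty) ∧
    (∀ i : Fin n, ∀ a ∈ Es i, n ≤ a) ∧
    (∀ i j : Fin n, i < j → ∀ a ∈ Es i, ∀ b ∈ Es j, a < b)

/-- The Tsirelson iterate norms `‖·‖_k`. -/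
noncomputable def tsir : ℕ → (ℕ →₀ ℝ) → ℝ
  | 0, x => ⨆ n, |x n|
  | (k + 1), x => max (tsir k x)
      (sSup { r : ℝ | ∃ n : ℕ, ∃ Es : Fin n → Finset ℕ, Admissible n Es ∧
        r = (1 / 2) * ∑ i, tsir k (restr (Es i) x) })

-- basic lemmas
lemma l1_nonneg (x : ℕ →₀ ℝ) : 0 ≤ l1 x :=
  Finset.sum_nonneg fun _ _ => abs_nonneg _

lemma abs_le_l1 (x : ℕ →₀ ℝ) (n : ℕ) : |x n| ≤ l1 x := by
  by_cases h : x n = 0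
  · simp [h, l1_nonneg x]
  · exact Finset.single_le_sum (f := fun k => |x k|) (fun _ _ => abs_nonneg _)
      (Finsupp.mem_support_iff.mpr h)

lemma range_bdd (x : ℕ →₀ ℝ) : BddAbove (Set.range fun n => |x n|) :=
  ⟨l1 x, by rintro r ⟨n, rfl⟩; exact abs_le_l1 x n⟩

lemma tsir0_le {x : ℕ →₀ ℝ} {c : ℝ} (h : ∀ n, |x n| ≤ c) : tsir 0 x ≤ c := by
  show (⨆ n, |x n|) ≤ c
  exact ciSup_le h

lemma le_tsir0 (x : ℕ →₀ ℝ) (n : ℕ) : |x n| ≤ tsir 0 x :=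
  le_ciSup (range_bdd x) n

lemma restr_apply (E : Finset ℕ) (x : ℕ →₀ ℝ) (k : ℕ) :
    restr E x k = if k ∈ E then x k else 0 := by
  classical
  simp [restr, Finsupp.filter_apply]

lemma l1_restr (E : Finset ℕ) (x : ℕ →₀ ℝ) :
    l1 (restr E x) = ∑ k ∈ x.support.filter (· ∈ E), |x k| := by
  classical
  unfold l1 restr
  rw [Finsupp.support_filter]
  refine Finset.sum_congr rfl fun k hk => ?_
  rw [Finset.mem_filter] at hk
  simp [Finsupp.filter_apply, hk.2]

lemma sum_l1_restr_le {m : ℕ} {Es : Fin m → Finset ℕ}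
    (hdisj : ∀ i j : Fin m, i ≠ j → Disjoint (Es i) (Es j)) (x : ℕ →₀ ℝ) :
    ∑ i, l1 (restr (Es i) x) ≤ l1 x := by
  classical
  have h1 : ∑ i, l1 (restr (Es i) x)
      = ∑ i, ∑ k ∈ x.support.filter (· ∈ Es i), |x k| := by
    refine Finset.sum_congr rfl fun i _ => l1_restr _ _
  rw [h1, ← Finset.sum_biUnion]
  · refine Finset.sum_le_sum_of_subset_of_nonneg ?_ (fun k _ _ => abs_nonneg _)
    intro k hk
    rcases Finset.mem_biUnion.mp hk with ⟨i, _, hi⟩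
    exact (Finset.mem_filter.mp hi).1
  · intro i _ j _ hij
    have := hdisj i j hij
    rw [Finset.disjoint_left] at this
    simp only [Function.onFun]
    rw [Finset.disjoint_left]
    intro a ha hb
    exact this (Finset.mem_filter.mp ha).2 (Finset.mem_filter.mp hb).2

lemma adm_disjoint {m : ℕ} {Es : Fin m → Finset ℕ} (h : Admissible m Es) :
    ∀ i j : Fin m, i ≠ j → Disjoint (Es i) (Es j) := by
  intro i j hij
  rw [Finset.disjoint_left]
  intro a hai haj
  rcases lt_or_gt_of_ne hij with hlt | hlt
  · exact absurd (h.2.2.2 i j hlt a hai a haj) (lt_irrefl a)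
  · exact absurd (h.2.2.2 j i hlt a haj a hai) (lt_irrefl a)

lemma tsir_le_l1 : ∀ (k : ℕ) (x : ℕ →₀ ℝ), tsir k x ≤ l1 x := by
  intro k
  induction k with
  | zero => intro x; exact tsir0_le fun n => abs_le_l1 x n
  | succ k ih =>
    intro x
    show max _ _ ≤ _
    refine max_le (ih x) (Real.sSup_le ?_ (l1_nonneg x))
    rintro r ⟨m, Es, hadm, rfl⟩
    have h1 : ∑ i, tsir k (restr (Es i) x) ≤ l1 x := by
      calc ∑ i, tsir k (restr (Es i) x) ≤ ∑ i, l1 (restr (Es i) x) :=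
            Finset.sum_le_sum fun i _ => ih _
        _ ≤ l1 x := sum_l1_restr_le (adm_disjoint hadm) x
    nlinarith [l1_nonneg x]

lemma bddAbove_S (k : ℕ) (x : ℕ →₀ ℝ) :
    BddAbove { r : ℝ | ∃ n : ℕ, ∃ Es : Fin n → Finset ℕ, Admissible n Es ∧
        r = (1 / 2) * ∑ i, tsir k (restr (Es i) x) } := by
  refine ⟨l1 x, ?_⟩
  rintro r ⟨m, Es, hadm, rfl⟩
  have h1 : ∑ i, tsir k (restr (Es i) x) ≤ l1 x := by
    calc ∑ i, tsir k (restr (Es i) x) ≤ ∑ i, l1 (restr (Es i) x) :=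
          Finset.sum_le_sum fun i _ => tsir_le_l1 _ _
      _ ≤ l1 x := sum_l1_restr_le (adm_disjoint hadm) x
  nlinarith [l1_nonneg x]

lemma le_tsir_succ {k : ℕ} {x : ℕ →₀ ℝ} {r : ℝ}
    (h : ∃ n : ℕ, ∃ Es : Fin n → Finset ℕ, Admissible n Es ∧
        r = (1 / 2) * ∑ i, tsir k (restr (Es i) x)) :
    r ≤ tsir (k + 1) x :=
  le_trans (le_csSup (bddAbove_S k x) h) (le_max_right _ _)

lemma tsir_succ_le {k : ℕ} {x : ℕ →₀ ℝ} {c : ℝ} (hc : 0 ≤ c)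
    (h1 : tsir k x ≤ c)
    (h2 : ∀ (m : ℕ) (Es : Fin m → Finset ℕ), Admissible m Es →
      (1 / 2) * ∑ i, tsir k (restr (Es i) x) ≤ c) :
    tsir (k + 1) x ≤ c := by
  show max _ _ ≤ c
  refine max_le h1 (Real.sSup_le ?_ hc)
  rintro r ⟨m, Es, hadm, rfl⟩
  exact h2 m Es hadm

-- block vectors
noncomputable def xb (a : ℕ) : ℕ →₀ ℝ :=
  Finsupp.indicator (Finset.Ico (2^a) (2^(a+1))) (fun _ _ => ((2:ℝ)^a)⁻¹)

lemma xb_apply (a k : ℕ) :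
    xb a k = if k ∈ Finset.Ico (2^a) (2^(a+1)) then ((2:ℝ)^a)⁻¹ else 0 := by
  classical
  rw [xb, Finsupp.indicator_apply]
  split <;> simp_all

lemma block_disj {a b k : ℕ} (ha : k ∈ Finset.Ico (2^a) (2^(a+1)))
    (hb : k ∈ Finset.Ico (2^b) (2^(b+1))) : a = b := by
  rw [Finset.mem_Ico] at ha hb
  by_contra hne
  rcases lt_or_gt_of_ne hne with h | h
  · exact absurd (lt_of_lt_of_le ha.2 (le_trans (Nat.pow_le_pow_right (by norm_num) h) hb.1))
      (lt_irrefl k)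
  · exact absurd (lt_of_lt_of_le hb.2 (le_trans (Nat.pow_le_pow_right (by norm_num) h) ha.1))
      (lt_irrefl k)

lemma tsir0_restr_singleton (p : ℕ) (y : ℕ →₀ ℝ) :
    tsir 0 (restr {p} y) = |y p| := by
  apply le_antisymm
  · refine tsir0_le fun k => ?_
    rw [restr_apply]
    by_cases hk : k ∈ ({p} : Finset ℕ)
    · rw [Finset.mem_singleton] at hk; subst hk; simp
    · simp [hk]
  · have := le_tsir0 (restr {p} y) p
    rwa [restr_apply, if_pos (Finset.mem_singleton_self p)] at this

lemma l1_xb (a : ℕ) : l1 (xb a) = 1 := by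
  classical
  have hsupp : (xb a).support = Finset.Ico (2^a) (2^(a+1)) := by
    ext k
    rw [Finsupp.mem_support_iff, xb_apply]
    split <;> simp_all
  rw [l1, hsupp]
  rw [Finset.sum_congr rfl (fun k hk => show |xb a k| = ((2:ℝ)^a)⁻¹ by
    rw [xb_apply, if_pos hk, abs_of_pos (by positivity)])]
  rw [Finset.sum_const, Nat.card_Ico]
  have : 2^(a+1) - 2^a = 2^a := by rw [pow_succ]; omega
  rw [this, nsmul_eq_mul]
  push_cast
  field_simp

lemma tsir1_xb {a : ℕ} (ha : 1 ≤ a) : tsir 1 (xb a) = 1 / 2 := by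
  apply le_antisymm
  · refine tsir_succ_le (by norm_num) ?_ ?_
    · refine tsir0_le fun k => ?_
      rw [xb_apply]
      have h2 : ((2:ℝ)^a)⁻¹ ≤ 1/2 := by
        rw [inv_le_comm₀ (by positivity) (by norm_num)]
        calc (1/2 : ℝ)⁻¹ = 2^1 := by norm_num
          _ ≤ 2^a := by exact pow_le_pow_right₀ (by norm_num) ha
      split
      · rw [abs_of_pos (by positivity)]; exact h2
      · simp
    · intro m Es hadm
      have h1 : ∑ i, tsir 0 (restr (Es i) (xb a)) ≤ 1 := by
        calc ∑ i, tsir 0 (restr (Es i) (xb a)) ≤ ∑ i, l1 (restr (Es i) (xb a)) :=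
              Finset.sum_le_sum fun i _ => tsir_le_l1 _ _
          _ ≤ l1 (xb a) := sum_l1_restr_le (adm_disjoint hadm) _
          _ = 1 := l1_xb a
      linarith
  · refine le_tsir_succ ⟨2^a, fun i => {2^a + i.val}, ?_, ?_⟩
    · refine ⟨Nat.pow_pos (n := a) (by norm_num), fun i => ⟨_, Finset.mem_singleton_self _⟩,
        ?_, ?_⟩
      · intro i b hb
        rw [Finset.mem_singleton] at hb; omega
      · intro i j hij b hb c hc
        rw [Finset.mem_singleton] at hb hc
        subst hb; subst hc
        have : i.val < j.val := hij
        omega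
    · have hterm : ∀ i : Fin (2^a), tsir 0 (restr {2^a + i.val} (xb a)) = ((2:ℝ)^a)⁻¹ := by
        intro i
        rw [tsir0_restr_singleton, xb_apply, if_pos, abs_of_pos (by positivity)]
        rw [Finset.mem_Ico]
        constructor
        · omega
        · have := i.isLt
          rw [pow_succ]; omega
      rw [Finset.sum_congr rfl fun i _ => hterm i, Finset.sum_const]
      simp only [Finset.card_univ, Fintype.card_fin, nsmul_eq_mul]
      push_cast
      field_simp

-- the sum vector
noncomputable def XX (n : ℕ) : ℕ →₀ ℝ := ∑ j : Fin n, xb (n + j.val)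

lemma XX_apply_cases (n k : ℕ) :
    (XX n) k = 0 ∨ ∃ j : Fin n, k ∈ Finset.Ico (2^(n+j.val)) (2^(n+j.val+1)) ∧
      (XX n) k = ((2:ℝ)^(n+j.val))⁻¹ := by
  classical
  have happ : (XX n) k = ∑ j : Fin n, xb (n + j.val) k := by
    rw [XX, Finsupp.finset_sum_apply]
  by_cases h : ∃ j : Fin n, k ∈ Finset.Ico (2^(n+j.val)) (2^(n+j.val+1))
  · obtain ⟨j0, hj0⟩ := h
    refine Or.inr ⟨j0, hj0, ?_⟩
    rw [happ, Finset.sum_eq_single j0]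
    · rw [xb_apply, if_pos hj0]
    · intro j _ hj
      rw [xb_apply, if_neg]
      intro hk
      exact hj (Fin.ext (by have := block_disj hk hj0; omega))
    · intro h'; exact absurd (Finset.mem_univ j0) h'
  · refine Or.inl ?_
    rw [happ]
    refine Finset.sum_eq_zero fun j _ => ?_
    rw [xb_apply, if_neg fun hk => h ⟨j, hk⟩]

lemma XX_pointwise (n k : ℕ) : |(XX n) k| ≤ 2 / (k : ℝ) := by
  rcases XX_apply_cases n k with h | ⟨j, hj, h⟩
  · rw [h, abs_zero]
    positivity
  · rw [h, abs_of_pos (by positivity)]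
    rw [Finset.mem_Ico] at hj
    have hk2 : (k : ℝ) ≤ 2 * 2^(n+j.val) := by
      have : k < 2^(n+j.val+1) := hj.2
      have : (k:ℝ) < 2^(n+j.val+1) := by exact_mod_cast this
      rw [pow_succ] at this; linarith
    have hkpos : 0 < (k : ℝ) := by
      have : 0 < 2^(n+j.val) := Nat.pow_pos (by norm_num)
      exact_mod_cast lt_of_lt_of_le this hj.1
    rw [inv_le_iff_one_le_mul₀ (by positivity) , div_mul_eq_mul_div, le_div_iff₀ hkpos]
    nlinarith [pow_pos (show (0:ℝ) < 2 by norm_num) (n+j.val)]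

lemma adm_min {m : ℕ} {Es : Fin m → Finset ℕ} (h : Admissible m Es) :
    ∀ i : Fin m, ∀ b ∈ Es i, m + i.val ≤ b := by
  suffices H : ∀ v : ℕ, ∀ (hv : v < m), ∀ b ∈ Es ⟨v, hv⟩, m + v ≤ b by
    intro i b hb; exact H i.val i.isLt b (by simpa using hb)
  intro v
  induction v with
  | zero => intro hv b hb; simpa using h.2.2.1 _ b hb
  | succ v ih =>
    intro hv b hb
    obtain ⟨c, hc⟩ := h.2.1 ⟨v, by omega⟩
    have h1 := ih (by omega) c hc
    have h2 := h.2.2.2 ⟨v, by omega⟩ ⟨v+1, hv⟩ (by simp [Fin.lt_def]) c hc b hb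
    omega

lemma tsir1_XX_le (n : ℕ) : tsir 1 (XX n) ≤ 1 := by
  refine tsir_succ_le (by norm_num) ?_ ?_
  · refine tsir0_le fun k => ?_
    rcases XX_apply_cases n k with h | ⟨j, _, h⟩
    · rw [h, abs_zero]; norm_num
    · rw [h, abs_of_pos (by positivity)]
      rw [inv_le_one_iff₀]
      right
      exact one_le_pow₀ (by norm_num)
  · intro m Es hadm
    have hterm : ∀ i : Fin m, tsir 0 (restr (Es i) (XX n)) ≤ 2 / ((m:ℝ) + i.val) := by
      intro i
      refine tsir0_le fun k => ?_
      rw [restr_apply]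
      by_cases hk : k ∈ Es i
      · rw [if_pos hk]
        have hmi : m + i.val ≤ k := adm_min hadm i k hk
        calc |(XX n) k| ≤ 2 / (k : ℝ) := XX_pointwise n k
          _ ≤ 2 / ((m:ℝ) + i.val) := by
              apply div_le_div_of_nonneg_left (by norm_num)
              · have : 0 < m := hadm.1
                positivity
              · exact_mod_cast hmi
      · rw [if_neg hk, abs_zero]
        have : 0 < m := hadm.1
        positivity
    have hm : 0 < m := hadm.1
    have hsum : ∑ i : Fin m, tsir 0 (restr (Es i) (XX n)) ≤ 2 := by
      calc ∑ i : Fin m, tsir 0 (restr (Es i) (XX n))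
          ≤ ∑ i : Fin m, 2 / ((m:ℝ) + i.val) := Finset.sum_le_sum fun i _ => hterm i
        _ ≤ ∑ _i : Fin m, 2 / (m:ℝ) := by
            refine Finset.sum_le_sum fun i _ => ?_
            apply div_le_div_of_nonneg_left (by norm_num)
            · exact_mod_cast hm
            · have : (0:ℝ) ≤ i.val := by positivity
              linarith
        _ = 2 := by
            rw [Finset.sum_const, Finset.card_univ, Fintype.card_fin, nsmul_eq_mul]
            field_simp
    linarith

lemma restr_block_XX (n : ℕ) (j : Fin n) :
    restr (Finset.Ico (2^(n+j.val)) (2^(n+j.val+1))) (XX n) = xb (n + j.val) := by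
  classical
  ext k
  rw [restr_apply]
  by_cases hk : k ∈ Finset.Ico (2^(n+j.val)) (2^(n+j.val+1))
  · rw [if_pos hk]
    rcases XX_apply_cases n k with h | ⟨j', hj', h⟩
    · exfalso
      have happ : (XX n) k = ∑ j' : Fin n, xb (n + j'.val) k := by
        rw [XX, Finsupp.finset_sum_apply]
      rw [happ] at h
      have := Finset.sum_eq_single (s := Finset.univ) (f := fun j' : Fin n => xb (n+j'.val) k) j
        (fun j' _ hj' => by
          simp only [xb_apply]
          rw [if_neg]
          intro hk'
          exact hj' (Fin.ext (by have := block_disj hk' hk; omega)))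
        (fun h' => absurd (Finset.mem_univ j) h')
      rw [this] at h
      simp only [xb_apply, if_pos hk] at h
      have : (0:ℝ) < ((2:ℝ)^(n+j.val))⁻¹ := by positivity
      linarith
    · have : j' = j := Fin.ext (by have := block_disj hj' hk; omega)
      subst this
      rw [h, xb_apply, if_pos hk]
  · rw [if_neg hk, xb_apply, if_neg hk]

lemma tsir2_XX_ge (n : ℕ) (hn : 1 ≤ n) : (n : ℝ) / 4 ≤ tsir 2 (XX n) := by
  have hadm : Admissible n (fun j : Fin n => Finset.Ico (2^(n+j.val)) (2^(n+j.val+1))) := by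
    refine ⟨hn, ?_, ?_, ?_⟩
    · intro j
      rw [Finset.nonempty_Ico]
      exact Nat.pow_lt_pow_right (by norm_num) (by omega)
    · intro j b hb
      rw [Finset.mem_Ico] at hb
      have h1 : n < 2^n := Nat.lt_two_pow_self
      have h2 : 2^n ≤ 2^(n+j.val) := Nat.pow_le_pow_right (by norm_num) (by omega)
      omega
    · intro i j hij a ha b hb
      rw [Finset.mem_Ico] at ha hb
      have hij' : i.val < j.val := hij
      have : 2^(n+i.val+1) ≤ 2^(n+j.val) := Nat.pow_le_pow_right (by norm_num) (by omega)
      omega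
  refine le_trans (le_of_eq ?_) (le_tsir_succ ⟨n, _, hadm, rfl⟩)
  have : ∀ j : Fin n, tsir 1 (restr (Finset.Ico (2^(n+j.val)) (2^(n+j.val+1))) (XX n)) = 1/2 := by
    intro j
    rw [restr_block_XX]
    exact tsir1_xb (by omega)
  rw [Finset.sum_congr rfl fun j _ => this j, Finset.sum_const, Finset.card_univ,
    Fintype.card_fin, nsmul_eq_mul]
  ring

/-- for every `n ≥ 1` there are `x_1, …, x_n ∈ c00` with `‖x_j‖_1 = 1/2`,
`‖Σ x_j‖_1 ≤ 1` and `‖Σ x_j‖_2 ≥ n/4`; consequently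
`sup { ‖x‖_2 / ‖x‖_1 : x ∈ c00, x ≠ 0 } = ∞`. -/
theorem tsir_two_over_one_unbounded :
    (∀ n : ℕ, 1 ≤ n → ∃ x : Fin n → (ℕ →₀ ℝ),
      (∀ j, tsir 1 (x j) = 1 / 2) ∧
      tsir 1 (∑ j, x j) ≤ 1 ∧
      (n : ℝ) / 4 ≤ tsir 2 (∑ j, x j)) ∧
    (∀ C : ℝ, ∃ x : ℕ →₀ ℝ, x ≠ 0 ∧ C < tsir 2 x / tsir 1 x) := by
  have main : ∀ n : ℕ, 1 ≤ n → ∃ x : Fin n → (ℕ →₀ ℝ),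
      (∀ j, tsir 1 (x j) = 1 / 2) ∧
      tsir 1 (∑ j, x j) ≤ 1 ∧
      (n : ℝ) / 4 ≤ tsir 2 (∑ j, x j) := by
    intro n hn
    refine ⟨fun j => xb (n + j.val), fun j => tsir1_xb (by omega), ?_, ?_⟩
    · exact tsir1_XX_le n
    · exact tsir2_XX_ge n hn
  refine ⟨main, fun C => ?_⟩
  set n : ℕ := ⌈4 * C⌉₊ + 1 with hndef
  have hn : 1 ≤ n := by omega
  have hC : C < (n : ℝ) / 4 := by
    have h1 : 4 * C ≤ (⌈4 * C⌉₊ : ℝ) := Nat.le_ceil _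
    have h2 : ((⌈4 * C⌉₊ : ℝ)) < n := by
      rw [hndef]; push_cast; linarith
    linarith
  have h2 := tsir2_XX_ge n hn
  have h1 := tsir1_XX_le n
  -- positivity of tsir 1 (XX n)
  have hval : (XX n) (2^n) = ((2:ℝ)^n)⁻¹ := by
    have hb := restr_block_XX n ⟨0, by omega⟩
    have hmem : 2^n ∈ Finset.Ico (2^(n+(0:ℕ))) (2^(n+(0:ℕ)+1)) := by
      simp [Finset.mem_Ico, pow_succ]
    have := congrArg (fun f : ℕ →₀ ℝ => f (2^n)) hb
    simp only [restr_apply] at this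
    rw [if_pos (by simpa using hmem)] at this
    rw [this, xb_apply, if_pos (by simpa using hmem)]
  have hne : XX n ≠ 0 := by
    intro h0
    rw [h0] at hval
    simp at hval
    exact absurd hval (by positivity)
  have hpos : 0 < tsir 1 (XX n) := by
    have hle : |(XX n) (2^n)| ≤ tsir 0 (XX n) := le_tsir0 _ _
    have h01 : tsir 0 (XX n) ≤ tsir 1 (XX n) := le_max_left _ _
    rw [hval, abs_of_pos (by positivity)] at hle
    have : (0:ℝ) < ((2:ℝ)^n)⁻¹ := by positivity
    linarith
  refine ⟨XX n, hne, ?_⟩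
  rw [lt_div_iff₀ hpos]
  have hn4 : (0:ℝ) < (n:ℝ)/4 := by
    have : (0:ℝ) < (n:ℝ) := by exact_mod_cast hn
    linarith
  nlinarith
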